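/- arXiv:2510.26527 — 2 statements merged into one kernel-verified Lean document; each statement's English description precedes it below -/
import Mathlib

section
/- Let N, T1, T2, T2', β be positive real numbers and L1, L1', L2' positive real numbers with L1' > L2' > L1. If either T2'/T1 < L2'·(1/L1 − 1/L1') or T2'/T2 < β·(L2'/L1 − 1), then the three-model inference time is strictly smaller than the two-model inference time, i.e. (N/L1')·T1 + (N/L2')·T2' + β·(N/L2')·T2 < (N/L1)·T1 + β·(N/L1)·T2. -/
/-- **Model Insertion Efficiency (three-model case).**
If either `T2'/T1 < L2'·(1/L1 − 1/L1')` or `T2'/T2 < β·(L2'/L1 − 1)`, then the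
three-model inference time is strictly smaller than the two-model inference time. -/
theorem three_model_faster_than_two_model
    (N T1 T2 T2' β L1 L1' L2' : ℝ)
    (hN : 0 < N) (hT1 : 0 < T1) (hT2 : 0 < T2) (hT2' : 0 < T2') (hβ : 0 < β)
    (hL1 : 0 < L1) (hL1' : 0 < L1') (hL2' : 0 < L2')
    (hord1 : L2' < L1') (hord2 : L1 < L2')
    (hcond : T2' / T1 < L2' * (1 / L1 - 1 / L1') ∨ T2' / T2 < β * (L2' / L1 - 1)) :
    N / L1' * T1 + N / L2' * T2' + β * (N / L2') * T2
      < N / L1 * T1 + β * (N / L1) * T2 := by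
  have hdiv : N / L2' ≤ N / L1 :=
    div_le_div_of_nonneg_left hN.le hL1 hord2.le
  have hdiv' : N / L1' ≤ N / L1 :=
    div_le_div_of_nonneg_left hN.le hL1 (hord2.trans hord1).le
  rcases hcond with h | h
  · rw [div_lt_iff₀ hT1] at h
    have key : N / L2' * T2' < N / L1 * T1 - N / L1' * T1 := by
      have hpos : 0 < N / L2' := by positivity
      have h3 := mul_lt_mul_of_pos_left h hpos
      calc N / L2' * T2' < N / L2' * (L2' * (1 / L1 - 1 / L1') * T1) := h3
        _ = N / L1 * T1 - N / L1' * T1 := by field_simp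
    have h1 : β * (N / L2') * T2 ≤ β * (N / L1) * T2 := by
      have := mul_le_mul_of_nonneg_left hdiv hβ.le
      exact mul_le_mul_of_nonneg_right this hT2.le
    linarith
  · rw [div_lt_iff₀ hT2] at h
    have key : N / L2' * T2' < β * (N / L1) * T2 - β * (N / L2') * T2 := by
      have hpos : 0 < N / L2' := by positivity
      have h3 := mul_lt_mul_of_pos_left h hpos
      calc N / L2' * T2' < N / L2' * (β * (L2' / L1 - 1) * T2) := h3
        _ = β * (N / L1) * T2 - β * (N / L2') * T2 := by field_simp
    have h2 : N / L1' * T1 ≤ N / L1 * T1 :=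
      mul_le_mul_of_nonneg_right hdiv' hT1.le
    linarith
end

section
/- Let p ∈ (0,1] be real and q = 1 − p, and let n ≥ 1 be a natural number. Then the variance of the acceptance length satisfies Var(N) = E[N²] − (E[N])², where E[N] = Σ_{k=1}^{n−1} k·p·q^{k−1} + n·q^{n−1} and E[N²] = Σ_{k=1}^{n−1} k²·p·q^{k−1} + n²·q^{n−1}, and Var(N) = (q − (2n−1)·q^n·(1−q) − q^{2n})/p². -/
open Finset

lemma aux_sum1 (p : ℝ) (hp : p ≠ 0) (q : ℝ) (hq : q = 1 - p) (m : ℕ) :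
    ∑ k ∈ Finset.Icc 1 m, (k : ℝ) * p * q ^ (k - 1) + ((m : ℝ) + 1) * q ^ m
      = (1 - q ^ (m + 1)) / p := by
  induction m with
  | zero => simp [hq]; field_simp
  | succ m ih =>
      rw [Finset.sum_Icc_succ_top (by omega : 1 ≤ m + 1)]
      have h : ∑ k ∈ Finset.Icc 1 m, (k : ℝ) * p * q ^ (k - 1)
          = (1 - q ^ (m + 1)) / p - ((m : ℝ) + 1) * q ^ m := by linarith
      rw [h]
      push_cast
      try simp only [Nat.add_sub_cancel]
      field_simp
      subst hq
      ring

lemma aux_sum2 (p : ℝ) (hp : p ≠ 0) (q : ℝ) (hq : q = 1 - p) (m : ℕ) :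
    ∑ k ∈ Finset.Icc 1 m, (k : ℝ) ^ 2 * p * q ^ (k - 1) + ((m : ℝ) + 1) ^ 2 * q ^ m
      = (q + 1 - 2 * q ^ (m + 1) - (2 * ((m : ℝ) + 1) - 1) * q ^ (m + 1) * p) / p ^ 2 := by
  induction m with
  | zero => simp [hq]; field_simp; ring
  | succ m ih =>
      rw [Finset.sum_Icc_succ_top (by omega : 1 ≤ m + 1)]
      have h : ∑ k ∈ Finset.Icc 1 m, (k : ℝ) ^ 2 * p * q ^ (k - 1)
          = (q + 1 - 2 * q ^ (m + 1) - (2 * ((m : ℝ) + 1) - 1) * q ^ (m + 1) * p) / p ^ 2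
            - ((m : ℝ) + 1) ^ 2 * q ^ m := by linarith
      rw [h]
      push_cast
      try simp only [Nat.add_sub_cancel]
      field_simp
      subst hq
      ring

/-- **Sampling Stability theorem**: the variance of the capped acceptance length,
`Var(N) = E[N²] − (E[N])²` with
`E[N] = Σ_{k=1}^{n−1} k·p·q^{k−1} + n·q^{n−1}` and
`E[N²] = Σ_{k=1}^{n−1} k²·p·q^{k−1} + n²·q^{n−1}`, satisfies
`Var(N) = (q − (2n−1)·q^n·(1−q) − q^{2n})/p²`, where `q = 1 − p`. -/
theorem acceptance_length_variance
    (p : ℝ) (hp0 : 0 < p) (hp1 : p ≤ 1) (q : ℝ) (hq : q = 1 - p)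
    (n : ℕ) (hn : 1 ≤ n) :
    (∑ k ∈ Finset.Icc 1 (n - 1), (k : ℝ) ^ 2 * p * q ^ (k - 1)
        + (n : ℝ) ^ 2 * q ^ (n - 1))
      - (∑ k ∈ Finset.Icc 1 (n - 1), (k : ℝ) * p * q ^ (k - 1)
        + (n : ℝ) * q ^ (n - 1)) ^ 2
      = (q - (2 * (n : ℝ) - 1) * q ^ n * (1 - q) - q ^ (2 * n)) / p ^ 2 := by
  have hp : p ≠ 0 := ne_of_gt hp0
  obtain ⟨m, rfl⟩ : ∃ m, n = m + 1 := ⟨n - 1, by omega⟩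
  have h1 := aux_sum1 p hp q hq m
  have h2 := aux_sum2 p hp q hq m
  simp only [Nat.add_sub_cancel] at *
  push_cast
  rw [h1, h2]
  field_simp
  subst hq
  ring
end
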